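/- arXiv:2404.19116 — 8 statements merged into one kernel-verified Lean document; each statement's English description precedes it below -/
import Mathlib

section
/- The cutoff p̄(α) = ((r + λ(1-α))R_L) / ((r+λ)R_H - λαR_L) is strictly decreasing in α on [0,1]. -/
/-- The cutoff `p̄(α) = ((r + λ(1-α))R_L)/((r+λ)R_H - λαR_L)` is strictly
decreasing in `α` on `[0,1]`. -/
theorem cutoff_strictAnti_in_alpha (r l RL RH : ℝ) (hr : 0 < r) (hl : 0 < l)
    (hRL : 0 < RL) (hRH : RL < RH) :
    StrictAntiOn (fun α : ℝ => ((r + l * (1 - α)) * RL) / ((r + l) * RH - l * α * RL))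
      (Set.Icc (0 : ℝ) 1) := by
  intro a ha b hb hab
  obtain ⟨ha0, ha1⟩ := ha
  obtain ⟨hb0, hb1⟩ := hb
  have hRH0 : 0 < RH := hRL.trans hRH
  have hda : 0 < (r + l) * RH - l * a * RL := by
    nlinarith [mul_pos hr hRH0, mul_nonneg (mul_nonneg hl.le hRL.le) (sub_nonneg.mpr ha1), mul_pos hl (sub_pos.mpr hRH)]
  have hdb : 0 < (r + l) * RH - l * b * RL := by
    nlinarith [mul_pos hr hRH0, mul_nonneg (mul_nonneg hl.le hRL.le) (sub_nonneg.mpr hb1), mul_pos hl (sub_pos.mpr hRH)]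
  simp only
  rw [div_lt_div_iff₀ hdb hda]
  nlinarith [mul_pos hRL (mul_pos (mul_pos hl (sub_pos.mpr hab)) (mul_pos (add_pos hr hl) (sub_pos.mpr hRH)))]
end

section
/- The cutoff p̄(α) = ((r + λ(1-α))R_L) / ((r+λ)R_H - λαR_L) is strictly increasing in r whenever α ∈ (0,1]. -/
/-- The cutoff `p̄(α)` is strictly increasing in the discount rate `r`
whenever `α ∈ (0,1]`. -/
theorem cutoff_strictMono_in_r (l RL RH α : ℝ) (hl : 0 < l)
    (hRL : 0 < RL) (hRH : RL < RH) (hα : α ∈ Set.Ioc (0 : ℝ) 1) :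
    StrictMonoOn (fun r : ℝ => ((r + l * (1 - α)) * RL) / ((r + l) * RH - l * α * RL))
      (Set.Ioi (0 : ℝ)) := by
  obtain ⟨hα0, hα1⟩ := hα
  intro a ha b hb hab
  simp only [Set.mem_Ioi] at ha hb
  have key : ∀ x : ℝ, 0 < x → 0 < (x + l) * RH - l * α * RL := by
    intro x hx
    nlinarith [mul_pos hx (hRL.trans hRH), mul_pos hl (sub_pos.mpr hRH),
      mul_nonneg (mul_nonneg hl.le (sub_nonneg.mpr hα1)) hRL.le]
  have hDa := key a ha
  have hDb := key b hb
  simp only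
  rw [div_lt_div_iff₀ hDa hDb]
  nlinarith [mul_pos (mul_pos (sub_pos.mpr hab) hα0) (mul_pos hl (mul_pos hRL (sub_pos.mpr hRH)))]
end

section
/- The cutoff p̄(α) = ((r + λ(1-α))R_L) / ((r+λ)R_H - λαR_L) is strictly decreasing in λ whenever α ∈ (0,1], and constant in λ when α = 0. -/
/-- The cutoff `p̄(α)` is strictly decreasing in the arrival rate `λ` whenever
`α ∈ (0,1]`, and constant in `λ` when `α = 0`. -/
theorem cutoff_anti_in_lambda (r RL RH α : ℝ) (hr : 0 < r)
    (hRL : 0 < RL) (hRH : RL < RH) :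
    (α ∈ Set.Ioc (0 : ℝ) 1 →
      StrictAntiOn (fun l : ℝ => ((r + l * (1 - α)) * RL) / ((r + l) * RH - l * α * RL))
        (Set.Ioi (0 : ℝ))) ∧
    (α = 0 → ∀ l₁ ∈ Set.Ioi (0 : ℝ), ∀ l₂ ∈ Set.Ioi (0 : ℝ),
      ((r + l₁ * (1 - α)) * RL) / ((r + l₁) * RH - l₁ * α * RL)
        = ((r + l₂ * (1 - α)) * RL) / ((r + l₂) * RH - l₂ * α * RL)) := by
  constructor
  · rintro ⟨hα0, hα1⟩ l₁ hl₁ l₂ hl₂ hlt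
    simp only [Set.mem_Ioi] at hl₁ hl₂
    have hD₁ : 0 < (r + l₁) * RH - l₁ * α * RL := by
      nlinarith [mul_pos hl₁ (sub_pos.mpr hRH), mul_pos hr (hRL.trans hRH),
        mul_nonneg (mul_nonneg hl₁.le (sub_nonneg.mpr hα1)) hRL.le]
    have hD₂ : 0 < (r + l₂) * RH - l₂ * α * RL := by
      nlinarith [mul_pos hl₂ (sub_pos.mpr hRH), mul_pos hr (hRL.trans hRH),
        mul_nonneg (mul_nonneg hl₂.le (sub_nonneg.mpr hα1)) hRL.le]
    rw [div_lt_div_iff₀ hD₂ hD₁]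
    nlinarith [mul_pos (mul_pos (mul_pos hr hRL) hα0) (sub_pos.mpr hlt),
      mul_pos hα0 (sub_pos.mpr hRH)]
  · rintro rfl l₁ hl₁ l₂ hl₂
    simp only [Set.mem_Ioi] at hl₁ hl₂
    have h₁ : 0 < r + l₁ := by linarith
    have h₂ : 0 < r + l₂ := by linarith
    simp only [mul_zero, zero_mul, sub_zero, mul_one]
    rw [div_eq_div_iff (by nlinarith) (by nlinarith)]
    ring
end

section
/- Let p̄(α) = ((r + λ(1-α))R_L)/((r+λ)R_H - λαR_L). The value p = p̄(α) is the unique solution in (0,1) of the indifference equation p R_H + (1-p)(λ/(r+λ)) R_L = R_L + p (λ(1-α)/(r+λ(1-α))) (R_H - R_L). -/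
/-- `p = p̄(α)` is the unique solution in `(0,1)` of the indifference equation
`p R_H + (1-p)(λ/(r+λ)) R_L = R_L + p (λ(1-α)/(r+λ(1-α))) (R_H - R_L)`. -/
theorem cutoff_unique_indifference (r l RL RH α : ℝ) (hr : 0 < r) (hl : 0 < l)
    (hRL : 0 < RL) (hRH : RL < RH) (hα : α ∈ Set.Icc (0 : ℝ) 1) :
    let pbar := ((r + l * (1 - α)) * RL) / ((r + l) * RH - l * α * RL)
    pbar ∈ Set.Ioo (0 : ℝ) 1 ∧
    pbar * RH + (1 - pbar) * (l / (r + l)) * RL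
      = RL + pbar * (l * (1 - α) / (r + l * (1 - α))) * (RH - RL) ∧
    ∀ p ∈ Set.Ioo (0 : ℝ) 1,
      p * RH + (1 - p) * (l / (r + l)) * RL
        = RL + p * (l * (1 - α) / (r + l * (1 - α))) * (RH - RL) → p = pbar := by
  obtain ⟨hα0, hα1⟩ := hα
  intro pbar
  have h1 : 0 < r + l * (1 - α) := by nlinarith
  have hN : 0 < (r + l * (1 - α)) * RL := mul_pos h1 hRL
  have hD : 0 < (r + l) * RH - l * α * RL := by nlinarith
  have hND : (r + l * (1 - α)) * RL < (r + l) * RH - l * α * RL := by nlinarith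
  have hrl : r + l ≠ 0 := by positivity
  have hrl2 : r + l * (1 - α) ≠ 0 := ne_of_gt h1
  have hDne : (r + l) * RH - l * α * RL ≠ 0 := ne_of_gt hD
  have main : ∀ q : ℝ,
      (q * RH + (1 - q) * (l / (r + l)) * RL
        = RL + q * (l * (1 - α) / (r + l * (1 - α))) * (RH - RL)) ↔
      q * ((r + l) * RH - l * α * RL) = (r + l * (1 - α)) * RL := by
    intro q
    constructor
    · intro h
      field_simp at h
      have h2 : r * (q * ((r + l) * RH - l * α * RL)) = r * ((r + l * (1 - α)) * RL) := by
        linear_combination h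
      exact mul_left_cancel₀ (ne_of_gt hr) h2
    · intro h
      field_simp
      linear_combination r * h
  have hpbar : pbar * ((r + l) * RH - l * α * RL) = (r + l * (1 - α)) * RL :=
    div_mul_cancel₀ _ hDne
  refine ⟨⟨div_pos hN hD, (div_lt_one hD).2 hND⟩, (main pbar).2 hpbar, ?_⟩
  intro p _ heq
  have := (main p).1 heq
  show p = ((r + l * (1 - α)) * RL) / ((r + l) * RH - l * α * RL)
  rw [eq_div_iff hDne]
  exact this
end

section
/- In the balanced news setting with one safe project and full disentanglement cutoff, the payoff of exploiting H, namely V_H(p) = pR_H + (1-p)(λ/(r+λ))R_L, exceeds the payoff of exploiting L, namely V_L(p) = R_L + p(λ(1-α)/(r+λ(1-α)))(R_H - R_L), if and only if p > p̄(α), where p̄(α) = ((r+λ(1-α))R_L)/((r+λ)R_H - λαR_L). -/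
/-- The payoff of exploiting `H` exceeds the payoff of exploiting `L` iff
the belief `p` exceeds the cutoff `p̄(α)`. -/
theorem exploitH_iff_above_cutoff (r l RL RH α p : ℝ) (hr : 0 < r) (hl : 0 < l)
    (hRL : 0 < RL) (hRH : RL < RH) (hα : α ∈ Set.Icc (0 : ℝ) 1)
    (hp : p ∈ Set.Icc (0 : ℝ) 1) :
    p * RH + (1 - p) * (l / (r + l)) * RL
        > RL + p * (l * (1 - α) / (r + l * (1 - α))) * (RH - RL)
      ↔ p > ((r + l * (1 - α)) * RL) / ((r + l) * RH - l * α * RL) := by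
  obtain ⟨hα0, hα1⟩ := hα
  have hA : 0 < r + l := by linarith
  have hB : 0 < r + l * (1 - α) := by nlinarith
  have hD : 0 < (r + l) * RH - l * α * RL := by nlinarith
  have key : (p * RH + (1 - p) * (l / (r + l)) * RL)
      - (RL + p * (l * (1 - α) / (r + l * (1 - α))) * (RH - RL))
      = r * (p * ((r + l) * RH - l * α * RL) - RL * (r + l * (1 - α)))
        / ((r + l) * (r + l * (1 - α))) := by
    field_simp
    ring
  rw [gt_iff_lt, ← sub_pos, key, gt_iff_lt, div_lt_iff₀ hD]
  rw [div_pos_iff]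
  constructor
  · rintro (⟨h1, _⟩ | ⟨h1, h2⟩)
    · nlinarith
    · nlinarith [mul_pos hA hB]
  · intro h
    left
    constructor
    · nlinarith
    · positivity
end

section
/- In the balanced news setting with two risky projects, exploring project x first until news (then y) yields expected payoff (1-ρ_x)e_0 + ρ_x(1-ρ_y)e_x + ρ_x ρ_y e*, where ρ_z = λ_z/(r+λ_z). Exploring x first weakly dominates exploring y first if and only if λ_x(e_x - e_0) ≥ λ_y(e_y - e_0). -/
/-- Balanced news, two risky projects: exploring `x` first until news (then `y`)
yields `(1-ρ_x)e₀ + ρ_x(1-ρ_y)e_x + ρ_x ρ_y e*`; exploring `x` first weakly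
dominates exploring `y` first iff `λ_x(e_x - e₀) ≥ λ_y(e_y - e₀)`. -/
theorem explore_x_first_iff (r lx ly e0 ex ey estar : ℝ)
    (hr : 0 < r) (hlx : 0 < lx) (hly : 0 < ly)
    (hex : e0 ≤ ex) (hey : e0 ≤ ey) (hex' : ex ≤ estar) (hey' : ey ≤ estar) :
    let ρx := lx / (r + lx)
    let ρy := ly / (r + ly)
    (1 - ρx) * e0 + ρx * (1 - ρy) * ex + ρx * ρy * estar
        ≥ (1 - ρy) * e0 + ρy * (1 - ρx) * ey + ρy * ρx * estar
      ↔ lx * (ex - e0) ≥ ly * (ey - e0) := by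
  intro ρx ρy
  have hx : (0:ℝ) < r + lx := by linarith
  have hy : (0:ℝ) < r + ly := by linarith
  have hc : (0:ℝ) < r / ((r + lx) * (r + ly)) := by positivity
  have key : ((1 - ρx) * e0 + ρx * (1 - ρy) * ex + ρx * ρy * estar)
      - ((1 - ρy) * e0 + ρy * (1 - ρx) * ey + ρy * ρx * estar)
      = r / ((r + lx) * (r + ly)) * (lx * (ex - e0) - ly * (ey - e0)) := by
    simp only [ρx, ρy]
    field_simp
    ring
  rw [ge_iff_le, ← sub_nonneg, key, ge_iff_le, ← sub_nonneg, sub_zero]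
  rw [mul_nonneg_iff_of_pos_left hc, sub_nonneg]
end

section
/- No exploration index exists: there is no function I : (0,1) × (0,∞) × (0,∞) → ℝ such that for every pair of projects (p_1,R_1,λ_1), (p_2,R_2,λ_2) in a balanced news setting, the agent optimally explores project 1 first if and only if I(p_1,R_1,λ_1) > I(p_2,R_2,λ_2). In particular, there exist three projects with parameters (p_i, R_i, λ_i), i=1,2,3, such that the optimal-exploration relation (project i explored over project j iff λ_i(1-p̃_i) > λ_j(1-p̃_j), with p̃ the modified probabilities) is cyclic: 1 ≻ 2, 2 ≻ 3, 3 ≻ 1. -/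
/-- Modified probability of project `x` (parameters `p, R`) given the
alternative project `y` (parameters `q, S`). -/
noncomputable def ptilde (p R q S : ℝ) : ℝ :=
  if p * R ≥ q * S then p else min (q * S / R) 1

/-- Project `x = (p,R,l)` is strictly optimally explored over `y = (q,S,m)`. -/
noncomputable def prefExplore (p R l q S m : ℝ) : Prop :=
  l * (1 - ptilde p R q S) > m * (1 - ptilde q S p R)

lemma cyc1 : prefExplore (1/4) 1 1 (1/4) 2 (1/2) := by
  unfold prefExplore ptilde; norm_num

lemma cyc2 : prefExplore (1/4) 2 (1/2) (1/4) (1/2) 2 := by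
  unfold prefExplore ptilde; norm_num

lemma cyc3 : prefExplore (1/4) (1/2) 2 (1/4) 1 1 := by
  unfold prefExplore ptilde; norm_num

/-- No exploration index exists: there is no index `I` such that, for all pairs
of projects in the balanced news setting, project 1 is strictly optimally
explored over project 2 iff `I` of project 1 exceeds `I` of project 2.
Moreover, there is a cyclic triple of projects. -/
theorem no_exploration_index :
    (¬ ∃ I : ℝ → ℝ → ℝ → ℝ,
      ∀ p₁ R₁ l₁ p₂ R₂ l₂ : ℝ,
        p₁ ∈ Set.Ioo (0 : ℝ) 1 → 0 < R₁ → 0 < l₁ →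
        p₂ ∈ Set.Ioo (0 : ℝ) 1 → 0 < R₂ → 0 < l₂ →
        (prefExplore p₁ R₁ l₁ p₂ R₂ l₂ ↔ I p₁ R₁ l₁ > I p₂ R₂ l₂)) ∧
    (∃ p₁ R₁ l₁ p₂ R₂ l₂ p₃ R₃ l₃ : ℝ,
      p₁ ∈ Set.Ioo (0 : ℝ) 1 ∧ 0 < R₁ ∧ 0 < l₁ ∧
      p₂ ∈ Set.Ioo (0 : ℝ) 1 ∧ 0 < R₂ ∧ 0 < l₂ ∧
      p₃ ∈ Set.Ioo (0 : ℝ) 1 ∧ 0 < R₃ ∧ 0 < l₃ ∧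
      prefExplore p₁ R₁ l₁ p₂ R₂ l₂ ∧
      prefExplore p₂ R₂ l₂ p₃ R₃ l₃ ∧
      prefExplore p₃ R₃ l₃ p₁ R₁ l₁) := by
  have hmem : (1/4 : ℝ) ∈ Set.Ioo (0 : ℝ) 1 := by norm_num
  constructor
  · rintro ⟨I, hI⟩
    have h1 := (hI (1/4) 1 1 (1/4) 2 (1/2) hmem (by norm_num) (by norm_num)
      hmem (by norm_num) (by norm_num)).mp cyc1
    have h2 := (hI (1/4) 2 (1/2) (1/4) (1/2) 2 hmem (by norm_num) (by norm_num)
      hmem (by norm_num) (by norm_num)).mp cyc2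
    have h3 := (hI (1/4) (1/2) 2 (1/4) 1 1 hmem (by norm_num) (by norm_num)
      hmem (by norm_num) (by norm_num)).mp cyc3
    linarith
  · exact ⟨1/4, 1, 1, 1/4, 2, 1/2, 1/4, 1/2, 2,
      hmem, by norm_num, by norm_num, hmem, by norm_num, by norm_num,
      hmem, by norm_num, by norm_num, cyc1, cyc2, cyc3⟩
end

section
/- In the pure good news setting with p_L R_L < p_H R_H < R_L, exploring project H until news yields payoff e_0 + w ρ_H (e_H - e_0), while exploring project L until news yields e_0 + ρ_L(1-ρ_H)(e_L - e_0) + ρ_L ρ_H (e_H - e_0). Exploring H is weakly optimal iff ρ_H (w - ρ_L)(e_H - e_0) ≥ ρ_L(1-ρ_H)(e_L - e_0), which, substituting e_H - e_0 = (1-p_H) p_L R_L and e_L - e_0 = (1-p_L) p_H R_H... is equivalent to λ_H^g ((w-ρ_L)/(1-ρ_L)) (1-p_H) ≥ λ_L^g (1 - p̃_L), where p̃_L = p_H R_H / R_L. -/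
/-- Initial exploration choice with pure good news: exploring project `H`
until news is weakly optimal, i.e.
`ρ_H (w - ρ_L)(e_H - e₀) ≥ ρ_L (1 - ρ_H)(e_L - e₀)`, iff
`λ_H^g ((w-ρ_L)/(1-ρ_L)) (1-p_H) ≥ λ_L^g (1 - p̃_L)` with `p̃_L = p_H R_H / R_L`. -/
theorem initial_choice_pure_good_news (r lLg lHg pL pH RL RH w : ℝ)
    (hr : 0 < r) (hlL : 0 < lLg) (hlH : 0 < lHg)
    (hpL : pL ∈ Set.Ioo (0 : ℝ) 1) (hpH : pH ∈ Set.Ioo (0 : ℝ) 1)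
    (hRL : 0 < RL) (hRH : RL < RH)
    (horder : pL * RL < pH * RH) (horder' : pH * RH < RL)
    (hw : w ∈ Set.Ioc (0 : ℝ) 1) :
    let ρL := lLg / (r + lLg)
    let ρH := lHg / (r + lHg)
    let e0 := pH * RH
    let eH := pH * RH + (1 - pH) * (pL * RL)
    let eL := pL * RL + (1 - pL) * (pH * RH)
    let ptL := pH * RH / RL
    (ρH * (w - ρL) * (eH - e0) ≥ ρL * (1 - ρH) * (eL - e0)
      ↔ lHg * ((w - ρL) / (1 - ρL)) * (1 - pH) ≥ lLg * (1 - ptL)) := by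
  obtain ⟨hpL0, hpL1⟩ := hpL
  obtain ⟨hpH0, hpH1⟩ := hpH
  intro ρL ρH e0 eH eL ptL
  have hd1 : (0:ℝ) < r + lLg := by linarith
  have hd2 : (0:ℝ) < r + lHg := by linarith
  have hρL : ρL < 1 := by
    rw [div_lt_one hd1]; linarith
  have h1ρL : (0:ℝ) < 1 - ρL := by linarith
  have hk : (0:ℝ) < (r + lLg) * (r + lHg) / (r * pL * RL) := by
    apply div_pos <;> positivity
  have heq : lHg * ((w - ρL) / (1 - ρL)) * (1 - pH) - lLg * (1 - ptL)
      = ((r + lLg) * (r + lHg) / (r * pL * RL)) *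
        (ρH * (w - ρL) * (eH - e0) - ρL * (1 - ρH) * (eL - e0)) := by
    show lHg * ((w - lLg / (r + lLg)) / (1 - lLg / (r + lLg))) * (1 - pH)
        - lLg * (1 - pH * RH / RL) = _
    have h1 : (1 : ℝ) - lLg / (r + lLg) = r / (r + lLg) := by
      field_simp
      ring
    rw [h1]
    show _ = ((r + lLg) * (r + lHg) / (r * pL * RL)) *
        (lHg / (r + lHg) * (w - lLg / (r + lLg)) *
          (pH * RH + (1 - pH) * (pL * RL) - pH * RH)
        - lLg / (r + lLg) * (1 - lHg / (r + lHg)) *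
          (pL * RL + (1 - pL) * (pH * RH) - pH * RH))
    have h2 : r + lLg ≠ 0 := by positivity
    have h3 : r + lHg ≠ 0 := by positivity
    have h4 : RL ≠ 0 := ne_of_gt hRL
    have h5 : r ≠ 0 := ne_of_gt hr
    have h6 : pL ≠ 0 := ne_of_gt hpL0
    field_simp
    ring
  rw [ge_iff_le, ge_iff_le, ← sub_nonneg, ← sub_nonneg (a := lHg * _ * _), heq]
  exact (mul_nonneg_iff_of_pos_left hk).symm
end
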